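/- Let H be a real Hilbert space, let A : H → H be an α-inverse strongly monotone mapping (α > 0), and let T : H → H be a nonexpansive mapping such that F(T) ∩ A⁻¹(0) ≠ ∅. Let {λ_n} ⊂ [a, b] for some a, b with 0 < a ≤ b < 2α and {α_n} ⊂ [c, d] for some c, d with 0 < c ≤ d < 1. Given x₀ ∈ H, define y_n = α_n x_n + (1 − α_n) T(x_n − λ_n A x_n) and x_{n+1} = T(y_n − λ_n A y_n). Then {x_n} converges weakly to a point p ∈ F(T) ∩ A⁻¹(0) (in particular p solves the variational inequality VI(F(T), A)), and p = lim_{n→∞} P_{F(T)∩A⁻¹(0)} x_n (strong limit). -/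

import Mathlib

open scoped RealInnerProductSpace
open Filter Topology

section Aux
variable {H : Type*} [NormedAddCommGroup H] [InnerProductSpace ℝ H]

private lemma aux_comb (t : ℝ) (u v : H) :
    ‖t • u + (1 - t) • v‖ ^ 2
      = t * ‖u‖ ^ 2 + (1 - t) * ‖v‖ ^ 2 - t * (1 - t) * ‖u - v‖ ^ 2 := by
  have h1 := norm_add_sq_real (t • u) ((1 - t) • v)
  have h2 := norm_sub_sq_real u v
  rw [real_inner_smul_left, real_inner_smul_right] at h1
  simp only [norm_smul, Real.norm_eq_abs, mul_pow, sq_abs] at h1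
  linear_combination h1 + t * (1 - t) * h2

private lemma aux_sq_le {r s : ℝ} (hr : 0 ≤ r) (hs : 0 ≤ s) (h : r ^ 2 ≤ s ^ 2) : r ≤ s := by
  nlinarith

private lemma aux_fix_seg {T : H → H} (hT : ∀ x y : H, ‖T x - T y‖ ≤ ‖x - y‖) {u v : H}
    (hu : T u = u) (hv : T v = v) {t : ℝ} (h0 : 0 ≤ t) (h1 : t ≤ 1) :
    T (u + t • (v - u)) = u + t • (v - u) := by
  set m := u + t • (v - u) with hm
  have hmu : ‖T m - u‖ ≤ t * ‖v - u‖ := by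
    calc ‖T m - u‖ = ‖T m - T u‖ := by rw [hu]
    _ ≤ ‖m - u‖ := hT _ _
    _ = t * ‖v - u‖ := by
        rw [hm, add_sub_cancel_left, norm_smul, Real.norm_eq_abs, abs_of_nonneg h0]
  have hmv : ‖T m - v‖ ≤ (1 - t) * ‖v - u‖ := by
    calc ‖T m - v‖ = ‖T m - T v‖ := by rw [hv]
    _ ≤ ‖m - v‖ := hT _ _
    _ = (1 - t) * ‖v - u‖ := by
        have : m - v = -((1 - t) • (v - u)) := by rw [hm]; module
        rw [this, norm_neg, norm_smul, Real.norm_eq_abs, abs_of_nonneg (by linarith)]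
  have hmu2 : ‖T m - u‖ ^ 2 ≤ (t * ‖v - u‖) ^ 2 :=
    pow_le_pow_left₀ (norm_nonneg _) hmu 2
  have hmv2 : ‖T m - v‖ ^ 2 ≤ ((1 - t) * ‖v - u‖) ^ 2 :=
    pow_le_pow_left₀ (norm_nonneg _) hmv 2
  have e1 : ‖T m - m‖ ^ 2
      = ‖T m - u‖ ^ 2 - 2 * (t * ⟪T m - u, v - u⟫) + t ^ 2 * ‖v - u‖ ^ 2 := by
    have h : T m - m = (T m - u) - t • (v - u) := by rw [hm]; abel
    rw [h, norm_sub_sq_real, real_inner_smul_right, norm_smul, Real.norm_eq_abs, mul_pow, sq_abs]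
  have e2 : ‖T m - v‖ ^ 2
      = ‖T m - u‖ ^ 2 - 2 * ⟪T m - u, v - u⟫ + ‖v - u‖ ^ 2 := by
    have h : T m - v = (T m - u) - (v - u) := by abel
    rw [h, norm_sub_sq_real]
  have hz : ‖T m - m‖ ^ 2 ≤ 0 := by nlinarith [norm_nonneg (v - u), sq_nonneg (‖v - u‖)]
  have : T m - m = 0 := by
    rw [← norm_eq_zero]
    nlinarith [norm_nonneg (T m - m)]
  exact sub_eq_zero.mp this

end Aux

set_option maxHeartbeats 2000000 in
theorem stmt_3
    {H : Type*} [NormedAddCommGroup H] [InnerProductSpace ℝ H] [CompleteSpace H]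
    (α : ℝ) (hα : 0 < α) (A : H → H)
    (hA : ∀ x y : H, ⟪A x - A y, x - y⟫ ≥ α * ‖A x - A y‖ ^ 2)
    (T : H → H) (hT : ∀ x y : H, ‖T x - T y‖ ≤ ‖x - y‖)
    (F : Set H)
    (hF : F = {x : H | T x = x} ∩ {x : H | A x = 0})
    (hFne : F.Nonempty)
    (a b c d : ℝ) (ha : 0 < a) (hab : a ≤ b) (hb : b < 2 * α)
    (hc : 0 < c) (hcd : c ≤ d) (hd : d < 1)
    (lam : ℕ → ℝ) (hlam : ∀ n, lam n ∈ Set.Icc a b)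
    (alp : ℕ → ℝ) (halp : ∀ n, alp n ∈ Set.Icc c d)
    (x y : ℕ → H)
    (hy : ∀ n, y n = alp n • x n + (1 - alp n) • T (x n - lam n • A (x n)))
    (hx : ∀ n, x (n + 1) = T (y n - lam n • A (y n)))
    (PF : H → H) (hPF : ∀ u : H, PF u ∈ F ∧ ∀ w ∈ F, ‖u - PF u‖ ≤ ‖u - w‖) :
    ∃ p ∈ F,
      (∀ z : H, T z = z → ⟪A p, z - p⟫ ≥ 0) ∧
      (∀ u : H, Tendsto (fun n => ⟪x n, u⟫) atTop (𝓝 ⟪p, u⟫)) ∧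
      Tendsto (fun n => PF (x n)) atTop (𝓝 p) := by
  obtain ⟨u0, hu0⟩ := hFne
  have memF : ∀ w : H, w ∈ F ↔ T w = w ∧ A w = 0 := by
    intro w; rw [hF]; exact Set.mem_inter_iff _ _ _
  obtain ⟨hTu0, hAu0⟩ := (memF u0).mp hu0
  -- general contraction estimate for I - l•A
  have step2 : ∀ (v w : H) (l : ℝ), a ≤ l → l ≤ b →
      ‖(v - l • A v) - (w - l • A w)‖ ^ 2
        ≤ ‖v - w‖ ^ 2 - l * (2 * α - l) * ‖A v - A w‖ ^ 2 := by
    intro v w l hla hlb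
    have hv := hA v w
    have hl0 : (0:ℝ) < l := lt_of_lt_of_le ha hla
    have expand : (v - l • A v) - (w - l • A w) = (v - w) - l • (A v - A w) := by module
    rw [real_inner_comm] at hv
    rw [expand, norm_sub_sq_real, real_inner_smul_right, norm_smul, Real.norm_eq_abs,
      mul_pow, sq_abs]
    nlinarith [mul_le_mul_of_nonneg_left hv hl0.le]
  have step : ∀ (v w : H), A w = 0 → ∀ l : ℝ, a ≤ l → l ≤ b →
      ‖(v - l • A v) - w‖ ^ 2 ≤ ‖v - w‖ ^ 2 - l * (2 * α - l) * ‖A v‖ ^ 2 := by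
    intro v w hw l hla hlb
    have := step2 v w l hla hlb
    rw [hw, smul_zero, sub_zero, sub_zero] at this
    exact this
  set z : ℕ → H := fun n => T (x n - lam n • A (x n)) with hz
  set κ : ℝ := a * (2 * α - b) with hκdef
  have hκpos : 0 < κ := by
    have : 0 < 2 * α - b := by linarith
    exact mul_pos ha this
  -- key one-step inequality
  have key : ∀ u : H, T u = u → A u = 0 → ∀ n : ℕ,
      ‖x (n + 1) - u‖ ^ 2 ≤ ‖x n - u‖ ^ 2 - ((1 - d) * κ) * ‖A (x n)‖ ^ 2
        - (c * (1 - d)) * ‖x n - z n‖ ^ 2 - κ * ‖A (y n)‖ ^ 2 := by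
    intro u hTu hAu n
    obtain ⟨hla, hlb⟩ := hlam n
    obtain ⟨htc, htd⟩ := halp n
    set l := lam n
    set t := alp n
    have hl0 : (0:ℝ) < l := lt_of_lt_of_le ha hla
    have ht0 : (0:ℝ) < t := lt_of_lt_of_le hc htc
    have ht1 : t < 1 := lt_of_le_of_lt htd hd
    have hκl : κ ≤ l * (2 * α - l) := by nlinarith
    -- h1 : z step
    have h1 : ‖z n - u‖ ^ 2 ≤ ‖x n - u‖ ^ 2 - l * (2 * α - l) * ‖A (x n)‖ ^ 2 := by
      have hzn : ‖z n - u‖ ≤ ‖(x n - l • A (x n)) - u‖ := by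
        calc ‖z n - u‖ = ‖T (x n - l • A (x n)) - T u‖ := by rw [hTu]
        _ ≤ ‖(x n - l • A (x n)) - u‖ := hT _ _
      calc ‖z n - u‖ ^ 2 ≤ ‖(x n - l • A (x n)) - u‖ ^ 2 :=
            pow_le_pow_left₀ (norm_nonneg _) hzn 2
      _ ≤ _ := step (x n) u hAu l hla hlb
    -- h3 : convex combination identity
    have h3 : ‖y n - u‖ ^ 2 = t * ‖x n - u‖ ^ 2 + (1 - t) * ‖z n - u‖ ^ 2
        - t * (1 - t) * ‖x n - z n‖ ^ 2 := by
      have hyu : y n - u = t • (x n - u) + (1 - t) • (z n - u) := by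
        rw [hy n]; module
      rw [hyu, aux_comb, sub_sub_sub_cancel_right]
    -- h4 : second T-step
    have h4 : ‖x (n + 1) - u‖ ^ 2 ≤ ‖y n - u‖ ^ 2 - l * (2 * α - l) * ‖A (y n)‖ ^ 2 := by
      have hxn : ‖x (n + 1) - u‖ ≤ ‖(y n - l • A (y n)) - u‖ := by
        calc ‖x (n + 1) - u‖ = ‖T (y n - l • A (y n)) - T u‖ := by rw [hx n, hTu]
        _ ≤ _ := hT _ _
      calc ‖x (n + 1) - u‖ ^ 2 ≤ ‖(y n - l • A (y n)) - u‖ ^ 2 :=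
            pow_le_pow_left₀ (norm_nonneg _) hxn 2
      _ ≤ _ := step (y n) u hAu l hla hlb
    have e1nn : (0:ℝ) ≤ ‖A (x n)‖ ^ 2 := sq_nonneg _
    have e2nn : (0:ℝ) ≤ ‖x n - z n‖ ^ 2 := sq_nonneg _
    have e3nn : (0:ℝ) ≤ ‖A (y n)‖ ^ 2 := sq_nonneg _
    have h1' : (1 - t) * ‖z n - u‖ ^ 2
        ≤ (1 - t) * (‖x n - u‖ ^ 2 - l * (2 * α - l) * ‖A (x n)‖ ^ 2) :=
      mul_le_mul_of_nonneg_left h1 (by linarith)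
    have c1 : ((1 - d) * κ) * ‖A (x n)‖ ^ 2 ≤ ((1 - t) * (l * (2 * α - l))) * ‖A (x n)‖ ^ 2 := by
      apply mul_le_mul_of_nonneg_right _ e1nn
      apply mul_le_mul (by linarith) hκl hκpos.le (by linarith)
    have c2 : (c * (1 - d)) * ‖x n - z n‖ ^ 2 ≤ (t * (1 - t)) * ‖x n - z n‖ ^ 2 := by
      apply mul_le_mul_of_nonneg_right _ e2nn
      apply mul_le_mul htc (by linarith) (by linarith) ht0.le
    have c3 : κ * ‖A (y n)‖ ^ 2 ≤ (l * (2 * α - l)) * ‖A (y n)‖ ^ 2 :=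
      mul_le_mul_of_nonneg_right hκl e3nn
    nlinarith [h4, h3, h1', c1, c2, c3]
  -- Fejér monotonicity
  have fej : ∀ u : H, T u = u → A u = 0 → ∀ n, ‖x (n + 1) - u‖ ≤ ‖x n - u‖ := by
    intro u hTu hAu n
    have hk := key u hTu hAu n
    have e1nn : (0:ℝ) ≤ ((1 - d) * κ) * ‖A (x n)‖ ^ 2 :=
      mul_nonneg (mul_nonneg (by linarith) hκpos.le) (sq_nonneg _)
    have e2nn : (0:ℝ) ≤ (c * (1 - d)) * ‖x n - z n‖ ^ 2 :=
      mul_nonneg (mul_nonneg hc.le (by linarith)) (sq_nonneg _)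
    have e3nn : (0:ℝ) ≤ κ * ‖A (y n)‖ ^ 2 := mul_nonneg hκpos.le (sq_nonneg _)
    exact aux_sq_le (norm_nonneg _) (norm_nonneg _) (by linarith)
  have fejA : ∀ u : H, T u = u → A u = 0 → Antitone (fun n => ‖x n - u‖) := by
    intro u hTu hAu
    exact antitone_nat_of_succ_le (fej u hTu hAu)
  -- convergence of distances
  set D : ℕ → ℝ := fun n => ‖x n - u0‖ ^ 2 with hD
  have hDanti : Antitone D := by
    intro m n hmn
    exact pow_le_pow_left₀ (norm_nonneg _) (fejA u0 hTu0 hAu0 hmn) 2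
  have hDbdd : BddBelow (Set.range D) := by
    refine ⟨0, ?_⟩
    rintro _ ⟨n, rfl⟩
    exact sq_nonneg _
  have hDtend : Tendsto D atTop (𝓝 (⨅ n, D n)) := tendsto_atTop_ciInf hDanti hDbdd
  have hdiff : Tendsto (fun n => D n - D (n + 1)) atTop (𝓝 0) := by
    have h2 : Tendsto (fun n => D (n + 1)) atTop (𝓝 (⨅ n, D n)) :=
      hDtend.comp (tendsto_add_atTop_nat 1)
    have h3 := hDtend.sub h2
    rw [sub_self] at h3
    exact h3
  -- the three error terms tend to zero (squared)
  have sqz : ∀ (e : ℕ → ℝ) (μ : ℝ), 0 < μ → (∀ n, 0 ≤ e n) →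
      (∀ n, μ * e n ≤ D n - D (n + 1)) → Tendsto e atTop (𝓝 0) := by
    intro e μ hμ hnn hle
    apply squeeze_zero hnn (g := fun n => μ⁻¹ * (D n - D (n + 1)))
    · intro n
      rw [le_inv_mul_iff₀ hμ]
      exact hle n
    · have h4 := hdiff.const_mul μ⁻¹
      rw [mul_zero] at h4
      exact h4
  have hAx2 : Tendsto (fun n => ‖A (x n)‖ ^ 2) atTop (𝓝 0) := by
    apply sqz _ ((1 - d) * κ) (mul_pos (by linarith) hκpos) (fun n => sq_nonneg _)
    intro n
    have hk := key u0 hTu0 hAu0 n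
    have e2nn : (0:ℝ) ≤ (c * (1 - d)) * ‖x n - z n‖ ^ 2 :=
      mul_nonneg (mul_nonneg hc.le (by linarith)) (sq_nonneg _)
    have e3nn : (0:ℝ) ≤ κ * ‖A (y n)‖ ^ 2 := mul_nonneg hκpos.le (sq_nonneg _)
    simp only [hD]
    linarith
  have hxz2 : Tendsto (fun n => ‖x n - z n‖ ^ 2) atTop (𝓝 0) := by
    apply sqz _ (c * (1 - d)) (mul_pos hc (by linarith)) (fun n => sq_nonneg _)
    intro n
    have hk := key u0 hTu0 hAu0 n
    have e1nn : (0:ℝ) ≤ ((1 - d) * κ) * ‖A (x n)‖ ^ 2 :=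
      mul_nonneg (mul_nonneg (by linarith) hκpos.le) (sq_nonneg _)
    have e3nn : (0:ℝ) ≤ κ * ‖A (y n)‖ ^ 2 := mul_nonneg hκpos.le (sq_nonneg _)
    simp only [hD]
    linarith
  have hAy2 : Tendsto (fun n => ‖A (y n)‖ ^ 2) atTop (𝓝 0) := by
    apply sqz _ κ hκpos (fun n => sq_nonneg _)
    intro n
    have hk := key u0 hTu0 hAu0 n
    have e1nn : (0:ℝ) ≤ ((1 - d) * κ) * ‖A (x n)‖ ^ 2 :=
      mul_nonneg (mul_nonneg (by linarith) hκpos.le) (sq_nonneg _)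
    have e2nn : (0:ℝ) ≤ (c * (1 - d)) * ‖x n - z n‖ ^ 2 :=
      mul_nonneg (mul_nonneg hc.le (by linarith)) (sq_nonneg _)
    simp only [hD]
    linarith
  have sqrt_tendsto : ∀ f : ℕ → H, Tendsto (fun n => ‖f n‖ ^ 2) atTop (𝓝 0) →
      Tendsto (fun n => ‖f n‖) atTop (𝓝 0) := by
    intro f hf
    have h := (Real.continuous_sqrt.tendsto 0).comp hf
    simp only [Real.sqrt_zero] at h
    refine h.congr fun n => ?_
    exact Real.sqrt_sq (norm_nonneg _)
  have hAx : Tendsto (fun n => ‖A (x n)‖) atTop (𝓝 0) := sqrt_tendsto _ hAx2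
  have hxz : Tendsto (fun n => ‖x n - z n‖) atTop (𝓝 0) := sqrt_tendsto _ hxz2
  have hAy : Tendsto (fun n => ‖A (y n)‖) atTop (𝓝 0) := sqrt_tendsto _ hAy2
  -- asymptotic regularity for T
  have hxT : Tendsto (fun n => ‖x n - T (x n)‖) atTop (𝓝 0) := by
    apply squeeze_zero (fun n => norm_nonneg _) (g := fun n => ‖x n - z n‖ + b * ‖A (x n)‖)
    · intro n
      have h1 : ‖x n - T (x n)‖ ≤ ‖x n - z n‖ + ‖z n - T (x n)‖ := by
        have := norm_add_le (x n - z n) (z n - T (x n))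
        simpa [sub_add_sub_cancel] using this
      have h2 : ‖z n - T (x n)‖ ≤ lam n * ‖A (x n)‖ := by
        calc ‖z n - T (x n)‖ ≤ ‖(x n - lam n • A (x n)) - x n‖ := hT _ _
        _ = lam n * ‖A (x n)‖ := by
            rw [sub_sub_cancel_left, norm_neg, norm_smul, Real.norm_eq_abs,
              abs_of_nonneg (lt_of_lt_of_le ha (hlam n).1).le]
      have h3 : lam n * ‖A (x n)‖ ≤ b * ‖A (x n)‖ :=
        mul_le_mul_of_nonneg_right (hlam n).2 (norm_nonneg _)
      linarith
    · have := hxz.add (hAx.const_mul b)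
      simpa using this
  -- uniform bound
  set M : ℝ := ‖x 0 - u0‖ + ‖u0‖ with hM
  have hMb : ∀ n, ‖x n‖ ≤ M := by
    intro n
    have h1 : ‖x n‖ ≤ ‖x n - u0‖ + ‖u0‖ := by
      have := norm_add_le (x n - u0) u0
      simpa using this
    have h2 : ‖x n - u0‖ ≤ ‖x 0 - u0‖ := fejA u0 hTu0 hAu0 (Nat.zero_le n)
    linarith
  -- A is Lipschitz
  have hALip : ∀ v w : H, ‖A v - A w‖ ≤ α⁻¹ * ‖v - w‖ := by
    intro v w
    have h1 := hA v w
    have h2 := abs_real_inner_le_norm (A v - A w) (v - w)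
    rcases eq_or_lt_of_le (norm_nonneg (A v - A w)) with h | h
    · rw [← h]
      positivity
    · rw [le_inv_mul_iff₀ hα]
      have h3 : ⟪A v - A w, v - w⟫ ≤ ‖A v - A w‖ * ‖v - w‖ := (le_abs_self _).trans h2
      nlinarith
  -- fixed points of G := T ∘ (I - a•A) are in F
  have hGfix : ∀ v : H, T (v - a • A v) = v → (T v = v ∧ A v = 0) := by
    intro v hv
    have h1 : ‖v - u0‖ ^ 2 ≤ ‖v - u0‖ ^ 2 - a * (2 * α - a) * ‖A v‖ ^ 2 := by
      calc ‖v - u0‖ ^ 2 = ‖T (v - a • A v) - T u0‖ ^ 2 := by rw [hv, hTu0]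
      _ ≤ ‖(v - a • A v) - u0‖ ^ 2 :=
          pow_le_pow_left₀ (norm_nonneg _) (hT _ _) 2
      _ ≤ _ := step v u0 hAu0 a le_rfl hab
    have h2 : a * (2 * α - a) * ‖A v‖ ^ 2 ≤ 0 := by linarith
    have h3 : (0:ℝ) < a * (2 * α - a) := by nlinarith
    have h4 : ‖A v‖ ^ 2 ≤ 0 := by
      by_contra hcon
      push_neg at hcon
      nlinarith
    have h5 : A v = 0 := by
      rw [← norm_eq_zero]
      nlinarith [norm_nonneg (A v), sq_nonneg (‖A v‖)]
    refine ⟨?_, h5⟩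
    rw [h5, smul_zero, sub_zero] at hv
    exact hv
  -- F is "segment-closed" (convex)
  have hFseg : ∀ u v : H, u ∈ F → v ∈ F → ∀ t : ℝ, 0 ≤ t → t ≤ 1 →
      u + t • (v - u) ∈ F := by
    intro u v hu hv t h0 h1
    obtain ⟨hTu, hAu⟩ := (memF u).mp hu
    obtain ⟨hTv, hAv⟩ := (memF v).mp hv
    set G : H → H := fun w => T (w - a • A w) with hG
    have hGnon : ∀ v w : H, ‖G v - G w‖ ≤ ‖v - w‖ := by
      intro v w
      have h2 : ‖G v - G w‖ ^ 2 ≤ ‖v - w‖ ^ 2 - a * (2 * α - a) * ‖A v - A w‖ ^ 2 := by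
        calc ‖G v - G w‖ ^ 2 ≤ ‖(v - a • A v) - (w - a • A w)‖ ^ 2 :=
            pow_le_pow_left₀ (norm_nonneg _) (hT _ _) 2
        _ ≤ _ := step2 v w a le_rfl hab
      have h3 : (0:ℝ) ≤ a * (2 * α - a) * ‖A v - A w‖ ^ 2 := by
        have : (0:ℝ) < a * (2 * α - a) := by nlinarith
        exact mul_nonneg this.le (sq_nonneg _)
      exact aux_sq_le (norm_nonneg _) (norm_nonneg _) (by linarith)
    have hGu : G u = u := by
      simp only [hG, hAu, smul_zero, sub_zero, hTu]
    have hGv : G v = v := by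
      simp only [hG, hAv, smul_zero, sub_zero, hTv]
    have := aux_fix_seg hGnon hGu hGv h0 h1
    have h6 := hGfix _ this
    exact (memF _).mpr h6
  -- projection variational inequality
  have hproj : ∀ v : H, ∀ w ∈ F, ⟪v - PF v, w - PF v⟫ ≤ 0 := by
    intro v w hw
    set u := PF v with hu
    have huF : u ∈ F := (hPF v).1
    by_contra hcon
    push_neg at hcon
    set s : ℝ := ⟪v - u, w - u⟫ with hs
    set N : ℝ := ‖w - u‖ ^ 2 with hN
    have hN0 : (0:ℝ) ≤ N := sq_nonneg _
    set t : ℝ := min 1 (s / (N + 1)) with ht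
    have ht0 : 0 < t := lt_min one_pos (div_pos hcon (by linarith))
    have ht1 : t ≤ 1 := min_le_left _ _
    have htle : t ≤ s / (N + 1) := min_le_right _ _
    have hzF : u + t • (w - u) ∈ F := hFseg u w huF hw t ht0.le ht1
    have hmin := (hPF v).2 _ hzF
    rw [← hu] at hmin
    have hmin2 : ‖v - u‖ ^ 2 ≤ ‖v - (u + t • (w - u))‖ ^ 2 :=
      pow_le_pow_left₀ (norm_nonneg _) hmin 2
    have hexp : ‖v - (u + t • (w - u))‖ ^ 2 = ‖v - u‖ ^ 2 - 2 * (t * s) + t ^ 2 * N := by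
      have h : v - (u + t • (w - u)) = (v - u) - t • (w - u) := by abel
      rw [h, norm_sub_sq_real, real_inner_smul_right, norm_smul, Real.norm_eq_abs,
        mul_pow, sq_abs, hs, hN]
    rw [hexp] at hmin2
    -- 2 s ≤ t N and t N ≤ s gives contradiction
    have h7 : 2 * s ≤ t * N := by
      have := hmin2
      nlinarith
    have h8 : t * N ≤ s := by
      have h9 : t * N ≤ (s / (N + 1)) * N := mul_le_mul_of_nonneg_right htle hN0
      have h10 : (s / (N + 1)) * N ≤ s := by
        rw [div_mul_eq_mul_div, div_le_iff₀ (by linarith)]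
        nlinarith
      linarith
    linarith
  -- the projection sequence
  set u_ : ℕ → H := fun n => PF (x n) with hu_
  have hu_F : ∀ n, u_ n ∈ F := fun n => (hPF (x n)).1
  set d_ : ℕ → ℝ := fun n => ‖x n - u_ n‖ with hd_
  have hd_nn : ∀ n, 0 ≤ d_ n := fun n => norm_nonneg _
  have hd_anti : Antitone d_ := by
    apply antitone_nat_of_succ_le
    intro n
    obtain ⟨hTn, hAn⟩ := (memF (u_ n)).mp (hu_F n)
    calc d_ (n + 1) ≤ ‖x (n + 1) - u_ n‖ := (hPF (x (n + 1))).2 _ (hu_F n)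
    _ ≤ ‖x n - u_ n‖ := fej (u_ n) hTn hAn n
  have hd_bdd : BddBelow (Set.range d_) := by
    refine ⟨0, ?_⟩
    rintro _ ⟨n, rfl⟩
    exact hd_nn n
  set δ : ℝ := ⨅ n, d_ n with hδ
  have hd_tend : Tendsto d_ atTop (𝓝 δ) := tendsto_atTop_ciInf hd_anti hd_bdd
  have hδ0 : 0 ≤ δ := le_ciInf hd_nn
  have hδle : ∀ n, δ ≤ d_ n := fun n => ciInf_le hd_bdd n
  -- the key quantitative estimate: for n ≤ m, ‖u_ m - u_ n‖ ^ 2 ≤ d_ n ^ 2 - d_ m ^ 2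
  have hkey2 : ∀ m n : ℕ, n ≤ m → ‖u_ m - u_ n‖ ^ 2 ≤ d_ n ^ 2 - d_ m ^ 2 := by
    intro m n hnm
    have hp := hproj (x m) (u_ n) (hu_F n)
    have hexp : ‖x m - u_ n‖ ^ 2
        = d_ m ^ 2 + 2 * ⟪x m - u_ m, u_ m - u_ n⟫ + ‖u_ m - u_ n‖ ^ 2 := by
      have h : x m - u_ n = (x m - u_ m) + (u_ m - u_ n) := by abel
      rw [h, norm_add_sq_real]
    have hip : (0:ℝ) ≤ ⟪x m - u_ m, u_ m - u_ n⟫ := by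
      have h : ⟪x m - u_ m, u_ m - u_ n⟫ = -⟪x m - u_ m, u_ n - u_ m⟫ := by
        rw [← inner_neg_right, neg_sub]
      rw [h]
      linarith
    have hfe : ‖x m - u_ n‖ ≤ d_ n := by
      obtain ⟨hTn, hAn⟩ := (memF (u_ n)).mp (hu_F n)
      exact fejA (u_ n) hTn hAn hnm
    have hfe2 : ‖x m - u_ n‖ ^ 2 ≤ d_ n ^ 2 :=
      pow_le_pow_left₀ (norm_nonneg _) hfe 2
    nlinarith
  have hCauchy : CauchySeq u_ := by
    rw [Metric.cauchySeq_iff]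
    intro ε hε
    -- choose N with d_ N ^ 2 < δ ^ 2 + ε ^ 2
    have hd2 : Tendsto (fun n => d_ n ^ 2) atTop (𝓝 (δ ^ 2)) := hd_tend.pow 2
    have hev : ∀ᶠ n in atTop, d_ n ^ 2 < δ ^ 2 + ε ^ 2 := by
      apply hd2.eventually_lt_const
      nlinarith
    obtain ⟨N, hN⟩ := hev.exists
    refine ⟨N, fun m hm n hn => ?_⟩
    rcases le_total n m with h | h
    · have h1 := hkey2 m n h
      have h2 : d_ n ^ 2 ≤ d_ N ^ 2 := by
        have := hd_anti hn
        nlinarith [hd_nn n, hd_nn N]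
      have h3 : δ ^ 2 ≤ d_ m ^ 2 := by nlinarith [hδle m, hd_nn m]
      rw [dist_eq_norm]
      apply lt_of_pow_lt_pow_left₀ 2 hε.le
      nlinarith
    · have h1 := hkey2 n m h
      have h2 : d_ m ^ 2 ≤ d_ N ^ 2 := by
        have := hd_anti hm
        nlinarith [hd_nn m, hd_nn N]
      have h3 : δ ^ 2 ≤ d_ n ^ 2 := by nlinarith [hδle n, hd_nn n]
      rw [dist_eq_norm, ← norm_neg, neg_sub]
      apply lt_of_pow_lt_pow_left₀ 2 hε.le
      nlinarith
  obtain ⟨q, hq⟩ := cauchySeq_tendsto_of_complete hCauchy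
  have hqdist : Tendsto (fun n => ‖u_ n - q‖) atTop (𝓝 0) := by
    have h := (hq.sub (tendsto_const_nhds (x := q))).norm
    rw [sub_self, norm_zero] at h
    exact h
  -- q ∈ F
  have hTq : T q = q := by
    have hb : ∀ n, ‖T q - q‖ ≤ 2 * ‖u_ n - q‖ := by
      intro n
      obtain ⟨hTn, _⟩ := (memF (u_ n)).mp (hu_F n)
      have h2 : ‖T q - q‖ ≤ ‖T q - u_ n‖ + ‖u_ n - q‖ := by
        have := norm_add_le (T q - u_ n) (u_ n - q)
        simpa [sub_add_sub_cancel] using this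
      have h1 : ‖T q - u_ n‖ ≤ ‖q - u_ n‖ := by
        calc ‖T q - u_ n‖ = ‖T q - T (u_ n)‖ := by rw [hTn]
        _ ≤ ‖q - u_ n‖ := hT _ _
      have h3 : ‖q - u_ n‖ = ‖u_ n - q‖ := by rw [← norm_neg, neg_sub]
      linarith
    have htend : Tendsto (fun n => 2 * ‖u_ n - q‖) atTop (𝓝 (2 * 0)) := hqdist.const_mul 2
    have h0 : ‖T q - q‖ ≤ 2 * 0 := ge_of_tendsto' htend hb
    rw [← sub_eq_zero, ← norm_eq_zero]
    linarith [norm_nonneg (T q - q)]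
  have hAq : A q = 0 := by
    have hb : ∀ n, ‖A q‖ ≤ α⁻¹ * ‖q - u_ n‖ := by
      intro n
      obtain ⟨_, hAn⟩ := (memF (u_ n)).mp (hu_F n)
      have := hALip q (u_ n)
      rw [hAn, sub_zero] at this
      exact this
    have hq2 : Tendsto (fun n => α⁻¹ * ‖q - u_ n‖) atTop (𝓝 0) := by
      have h : Tendsto (fun n => ‖q - u_ n‖) atTop (𝓝 0) := by
        refine hqdist.congr fun n => ?_
        rw [← norm_neg, neg_sub]
      have := h.const_mul α⁻¹
      rwa [mul_zero] at this
    have h1 := ge_of_tendsto' hq2 hb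
    rw [← norm_eq_zero]
    linarith [norm_nonneg (A q)]
  have hqF : q ∈ F := (memF q).mpr ⟨hTq, hAq⟩
  -- every weak cluster point along an ultrafilter equals q
  have hclus : ∀ (p : H) (U : Ultrafilter ℕ), (↑U : Filter ℕ) ≤ atTop →
      (∀ v : H, Tendsto (fun n => ⟪x n, v⟫) (↑U) (𝓝 ⟪p, v⟫)) → p = q := by
    intro p U hU hweak
    have hAxU : Tendsto (fun n => ‖A (x n)‖) (↑U) (𝓝 0) := hAx.mono_left hU
    have hxTU : Tendsto (fun n => ‖x n - T (x n)‖) (↑U) (𝓝 0) := hxT.mono_left hU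
    have hqU : Tendsto u_ (↑U) (𝓝 q) := hq.mono_left hU
    have hqdU : Tendsto (fun n => ‖q - u_ n‖) (↑U) (𝓝 0) := by
      refine (hqdist.mono_left hU).congr fun n => ?_
      rw [← norm_neg, neg_sub]
    have hbnd : ∀ n, ‖x n - p‖ ≤ M + ‖p‖ := by
      intro n
      have := norm_sub_le (x n) p
      linarith [hMb n]
    -- A p = 0
    have hAp : A p = 0 := by
      have hle : ∀ n, α * ‖A (x n) - A p‖ ^ 2
          ≤ ⟪A (x n), x n - p⟫ - ⟪A p, x n - p⟫ := by
        intro n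
        have h1 := hA (x n) p
        rw [inner_sub_left] at h1
        linarith
      have hAxU0 : Tendsto (fun n => A (x n)) (↑U) (𝓝 0) :=
        tendsto_zero_iff_norm_tendsto_zero.mpr hAxU
      have l1 : Tendsto (fun n => α * ‖A (x n) - A p‖ ^ 2) (↑U)
          (𝓝 (α * ‖(0:H) - A p‖ ^ 2)) :=
        (((hAxU0.sub tendsto_const_nhds).norm).pow 2).const_mul α
      have l2 : Tendsto (fun n => ⟪A (x n), x n - p⟫) (↑U) (𝓝 0) := by
        apply squeeze_zero_norm (a := fun n => ‖A (x n)‖ * (M + ‖p‖))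
        · intro n
          have h1 := abs_real_inner_le_norm (A (x n)) (x n - p)
          have h2 : ‖A (x n)‖ * ‖x n - p‖ ≤ ‖A (x n)‖ * (M + ‖p‖) :=
            mul_le_mul_of_nonneg_left (hbnd n) (norm_nonneg _)
          rw [Real.norm_eq_abs]
          linarith
        · have := hAxU.mul_const (M + ‖p‖)
          rwa [zero_mul] at this
      have l3 : Tendsto (fun n => ⟪A p, x n - p⟫) (↑U) (𝓝 0) := by
        have h := (hweak (A p)).sub (tendsto_const_nhds (x := ⟪p, A p⟫))
        rw [sub_self] at h
        refine h.congr fun n => ?_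
        rw [inner_sub_right, real_inner_comm (x n) (A p), real_inner_comm p (A p)]
      have hfin := le_of_tendsto_of_tendsto' l1 (l2.sub l3) hle
      rw [sub_zero, zero_sub, norm_neg] at hfin
      have : ‖A p‖ ^ 2 ≤ 0 := by nlinarith
      rw [← norm_eq_zero]
      nlinarith [norm_nonneg (A p)]
    -- T p = p
    have hTp : T p = p := by
      have ineq : ∀ n, 2 * ⟪x n, p - T p⟫ - 2 * ⟪p, p - T p⟫ + ‖p - T p‖ ^ 2
          ≤ 2 * ‖x n - T (x n)‖ * (M + ‖p‖) + ‖x n - T (x n)‖ ^ 2 := by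
        intro n
        have t1 : ‖x n - T p‖ ≤ ‖x n - T (x n)‖ + ‖T (x n) - T p‖ := by
          have := norm_add_le (x n - T (x n)) (T (x n) - T p)
          simpa [sub_add_sub_cancel] using this
        have t2 : ‖T (x n) - T p‖ ≤ ‖x n - p‖ := hT _ _
        have h1 : ‖x n - T p‖ ≤ ‖x n - T (x n)‖ + ‖x n - p‖ := by linarith
        have h2 : ‖x n - T p‖ ^ 2 ≤ (‖x n - T (x n)‖ + ‖x n - p‖) ^ 2 :=
          pow_le_pow_left₀ (norm_nonneg _) h1 2
        have h3 : ‖x n - T p‖ ^ 2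
            = ‖x n - p‖ ^ 2 + 2 * ⟪x n - p, p - T p⟫ + ‖p - T p‖ ^ 2 := by
          have h : x n - T p = (x n - p) + (p - T p) := by abel
          rw [h, norm_add_sq_real]
        have h4 : ⟪x n - p, p - T p⟫ = ⟪x n, p - T p⟫ - ⟪p, p - T p⟫ :=
          inner_sub_left _ _ _
        have h5 : ‖x n - p‖ ≤ M + ‖p‖ := hbnd n
        nlinarith [norm_nonneg (x n - T (x n)), norm_nonneg (x n - p),
          mul_le_mul_of_nonneg_left h5 (norm_nonneg (x n - T (x n)))]
      have l1 : Tendsto (fun n => 2 * ⟪x n, p - T p⟫ - 2 * ⟪p, p - T p⟫ + ‖p - T p‖ ^ 2)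
          (↑U) (𝓝 (2 * ⟪p, p - T p⟫ - 2 * ⟪p, p - T p⟫ + ‖p - T p‖ ^ 2)) :=
        (((hweak (p - T p)).const_mul 2).sub tendsto_const_nhds).add tendsto_const_nhds
      have l2 : Tendsto (fun n => 2 * ‖x n - T (x n)‖ * (M + ‖p‖) + ‖x n - T (x n)‖ ^ 2)
          (↑U) (𝓝 (2 * 0 * (M + ‖p‖) + 0 ^ 2)) :=
        ((hxTU.const_mul 2).mul_const (M + ‖p‖)).add (hxTU.pow 2)
      have hfin := le_of_tendsto_of_tendsto' l1 l2 ineq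
      have : ‖p - T p‖ ^ 2 ≤ 0 := by nlinarith
      have h0 : p - T p = 0 := by
        rw [← norm_eq_zero]
        nlinarith [norm_nonneg (p - T p)]
      have := sub_eq_zero.mp h0
      exact this.symm
    -- p = q
    have hpF : p ∈ F := (memF p).mpr ⟨hTp, hAp⟩
    have ineq : ∀ n, ⟪x n, p - q⟫ + ⟪x n, q - u_ n⟫ - ⟪u_ n, p - u_ n⟫ ≤ 0 := by
      intro n
      have h := hproj (x n) p hpF
      have e : ⟪x n, p - q⟫ + ⟪x n, q - u_ n⟫ = ⟪x n, p - u_ n⟫ := by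
        rw [← inner_add_right, sub_add_sub_cancel]
      have hsplit : ⟪x n - u_ n, p - u_ n⟫
          = ⟪x n, p - q⟫ + ⟪x n, q - u_ n⟫ - ⟪u_ n, p - u_ n⟫ := by
        rw [inner_sub_left, e]
      rw [hsplit] at h
      exact h
    have l1 : Tendsto (fun n => ⟪x n, p - q⟫) (↑U) (𝓝 ⟪p, p - q⟫) := hweak _
    have l2 : Tendsto (fun n => ⟪x n, q - u_ n⟫) (↑U) (𝓝 0) := by
      apply squeeze_zero_norm (a := fun n => M * ‖q - u_ n‖)
      · intro n
        have h1 := abs_real_inner_le_norm (x n) (q - u_ n)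
        have h2 : ‖x n‖ * ‖q - u_ n‖ ≤ M * ‖q - u_ n‖ :=
          mul_le_mul_of_nonneg_right (hMb n) (norm_nonneg _)
        rw [Real.norm_eq_abs]
        linarith
      · have := hqdU.const_mul M
        rwa [mul_zero] at this
    have l3 : Tendsto (fun n => ⟪u_ n, p - u_ n⟫) (↑U) (𝓝 ⟪q, p - q⟫) :=
      hqU.inner (tendsto_const_nhds.sub hqU)
    have hfin := le_of_tendsto' ((l1.add l2).sub l3) ineq
    have e2 : ⟪p - q, p - q⟫ = ⟪p, p - q⟫ - ⟪q, p - q⟫ := inner_sub_left _ _ _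
    have e3 : ‖p - q‖ ^ 2 ≤ 0 := by
      rw [← real_inner_self_eq_norm_sq]
      linarith
    have h0 : p - q = 0 := by
      rw [← norm_eq_zero]
      nlinarith [norm_nonneg (p - q)]
    exact sub_eq_zero.mp h0
  -- assemble the result
  refine ⟨q, hqF, ?_, ?_, hq⟩
  · intro w hw
    rw [hAq, inner_zero_left]
  · intro v
    rw [tendsto_iff_ultrafilter]
    intro U hU
    set g : ℕ → WeakDual ℝ H :=
      fun n => StrongDual.toWeakDual (InnerProductSpace.toDual ℝ H (x n)) with hg
    have hgB : ∀ n, g n ∈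
        (⇑WeakDual.toStrongDual ⁻¹' Metric.closedBall (0 : StrongDual ℝ H) M) := by
      intro n
      simp only [Set.mem_preimage, mem_closedBall_zero_iff]
      calc ‖(WeakDual.toStrongDual (g n) : StrongDual ℝ H)‖
          = ‖InnerProductSpace.toDual ℝ H (x n)‖ := rfl
      _ = ‖x n‖ := (InnerProductSpace.toDual ℝ H).norm_map (x n)
      _ ≤ M := hMb n
    have hcomp := WeakDual.isCompact_closedBall (0 : StrongDual ℝ H) M
    have hle : ↑(U.map g) ≤
        𝓟 (⇑WeakDual.toStrongDual ⁻¹' Metric.closedBall (0 : StrongDual ℝ H) M) := by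
      rw [Ultrafilter.coe_map, le_principal_iff]
      exact Filter.mem_map.mpr (Filter.univ_mem' hgB)
    obtain ⟨f, hfB, hfle⟩ := hcomp.ultrafilter_le_nhds (U.map g) hle
    have hgf : Tendsto g (↑U) (𝓝 f) := by
      rwa [Ultrafilter.coe_map] at hfle
    set p : H := (InnerProductSpace.toDual ℝ H).symm (WeakDual.toStrongDual f) with hp
    have hweak : ∀ v' : H, Tendsto (fun n => ⟪x n, v'⟫) (↑U) (𝓝 ⟪p, v'⟫) := by
      intro v'
      have hev : Tendsto (fun n => (g n) v') (↑U) (𝓝 (f v')) :=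
        ((WeakDual.eval_continuous v').tendsto f).comp hgf
      have e2 : f v' = ⟪p, v'⟫ := by
        rw [hp]
        exact (InnerProductSpace.toDual_symm_apply).symm
      rw [e2] at hev
      refine hev.congr fun n => ?_
      rw [hg]
      exact InnerProductSpace.toDual_apply_apply
    have hpq := hclus p U hU hweak
    have hfinal := hweak v
    rwa [hpq] at hfinal
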